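/- Let A and B be finite non-collinear subsets of ℝ² such that every point of A + B has a unique representation, i.e., whenever a₁ + b₁ = a₂ + b₂ with a₁, a₂ ∈ A and b₁, b₂ ∈ B, one has a₁ = a₂ and b₁ = b₂. Then 2 i_{A+B} + b_{A+B} − 2 ≥ |B| · (2 i_A + b_A − 2) + (2 i_B + b_B − 2). -/

import Mathlib

open scoped Pointwise Classical RealInnerProductSpace

noncomputable section

/-- The plane `ℝ²`. -/
abbrev Pt : Type := EuclideanSpace ℝ (Fin 2)

/-- `b_A`: the number of points of `A` on the frontier of the convex hull of `A`. -/
def bdryCard (A : Finset Pt) : ℕ :=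
  (A.filter fun x => x ∈ frontier (convexHull ℝ (A : Set Pt))).card

/-- `i_A`: the number of points of `A` in the interior of the convex hull of `A`. -/
def intCard (A : Finset Pt) : ℕ :=
  (A.filter fun x => x ∈ interior (convexHull ℝ (A : Set Pt))).card

/-- `u` is an exterior normal to the convex hull of `A` at `x`,
i.e. `u·x = max {u·y : y ∈ A}` (for `x ∈ A`). -/
def IsExtNormal (A : Finset Pt) (u x : Pt) : Prop :=
  ∀ y ∈ A, ⟪u, y⟫ ≤ ⟪u, x⟫

/-- `A_u`: the set of points of `A` where `u·x` is maximal. -/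
def maxSet (A : Finset Pt) (u : Pt) : Finset Pt :=
  A.filter fun x => ∀ y ∈ A, ⟪u, y⟫ ≤ ⟪u, x⟫

/-- `C` is an arithmetic progression with difference `d`. -/
def IsAP (C : Finset Pt) (d : Pt) : Prop :=
  ∃ c : Pt, C = (Finset.range C.card).image fun k => c + (k : ℝ) • d

/-- `A_{v,upp}`: points of `A` having a nonzero exterior normal, all of whose
unit exterior normals `u` satisfy `u·v > 0`. -/
def upperSet (A : Finset Pt) (v : Pt) : Finset Pt :=
  A.filter fun a => (∃ u : Pt, u ≠ 0 ∧ IsExtNormal A u a) ∧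
    ∀ u : Pt, ‖u‖ = 1 → IsExtNormal A u a → 0 < ⟪u, v⟫

/-- `A_{v,low}`: points of `A` having a nonzero exterior normal, all of whose
unit exterior normals `u` satisfy `u·v < 0`. -/
def lowerSet (A : Finset Pt) (v : Pt) : Finset Pt :=
  A.filter fun a => (∃ u : Pt, u ≠ 0 ∧ IsExtNormal A u a) ∧
    ∀ u : Pt, ‖u‖ = 1 → IsExtNormal A u a → ⟪u, v⟫ < 0

/-- The unit vector `v` is not parallel to any side of the convex hull of `A`. -/
def NotParallelToSide (v : Pt) (A : Finset Pt) : Prop :=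
  ∀ u : Pt, ‖u‖ = 1 → ⟪u, v⟫ = 0 → (maxSet A u).card ≤ 1

/-- For `v = (v₁, v₂)`, the rotated vector `w = (v₂, -v₁)`. -/
def perp (v : Pt) : Pt := (EuclideanSpace.equiv (Fin 2) ℝ).symm ![v 1, -(v 0)]

/-- `r_{v,A}`: a point of `A` where `(perp v)·x` is maximal (the rightmost point of `A`);
it is unique when `v` is not parallel to any side of the convex hull of `A`. -/
def rPt (v : Pt) (A : Finset Pt) : Pt :=
  if h : ∃ x ∈ A, ∀ y ∈ A, ⟪perp v, y⟫ ≤ ⟪perp v, x⟫ then h.choose else 0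

/-- `l_{v,A}`: a point of `A` where `(perp v)·x` is minimal (the leftmost point of `A`);
it is unique when `v` is not parallel to any side of the convex hull of `A`. -/
def lPt (v : Pt) (A : Finset Pt) : Pt :=
  if h : ∃ x ∈ A, ∀ y ∈ A, ⟪perp v, x⟫ ≤ ⟪perp v, y⟫ then h.choose else 0


lemma card_sum_eq (A B : Finset Pt)
    (huniq : ∀ a₁ ∈ A, ∀ b₁ ∈ B, ∀ a₂ ∈ A, ∀ b₂ ∈ B,
      a₁ + b₁ = a₂ + b₂ → a₁ = a₂ ∧ b₁ = b₂) :
    (A + B).card = A.card * B.card := by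
  rw [Finset.card_add_iff]
  intro p hp q hq hpq
  simp only [Finset.coe_product, Set.mem_prod, Finset.mem_coe] at hp hq
  obtain ⟨h1, h2⟩ := huniq p.1 hp.1 p.2 hp.2 q.1 hq.1 q.2 hq.2 hpq
  exact Prod.ext h1 h2

lemma nonempty_of_noncol {S : Finset Pt} (h : ¬ Collinear ℝ (S : Set Pt)) : S.Nonempty := by
  rcases S.eq_empty_or_nonempty with rfl | hne
  · exact absurd (by simpa using collinear_empty ℝ Pt) h
  · exact hne

lemma hull_closed (S : Finset Pt) : IsClosed (convexHull ℝ (S : Set Pt)) :=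
  S.finite_toSet.isClosed_convexHull ℝ

lemma split_card (S : Finset Pt) : intCard S + bdryCard S = S.card := by
  have hfe : (S.filter fun x => x ∈ frontier (convexHull ℝ (S : Set Pt)))
      = S.filter (fun x => ¬ x ∈ interior (convexHull ℝ (S : Set Pt))) := by
    ext x
    simp only [Finset.mem_filter, and_congr_right_iff]
    intro hx
    have hxh : x ∈ convexHull ℝ (S : Set Pt) := subset_convexHull ℝ _ hx
    rw [frontier, (hull_closed S).closure_eq]
    exact ⟨fun h => h.2, fun h => ⟨hxh, h⟩⟩
  rw [intCard, bdryCard, hfe]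
  exact Finset.card_filter_add_card_filter_not
    (fun x => x ∈ interior (convexHull ℝ (S : Set Pt)))

set_option maxHeartbeats 1000000 in
lemma span_top {s : Set Pt} (h : ¬Collinear ℝ s) : affineSpan ℝ s = ⊤ := by
  have hne : s.Nonempty := by
    rcases s.eq_empty_or_nonempty with rfl | hne
    · exact absurd (collinear_empty ℝ Pt) h
    · exact hne
  rw [AffineSubspace.affineSpan_eq_top_iff_vectorSpan_eq_top_of_nonempty ℝ Pt Pt hne]
  apply Submodule.eq_top_of_finrank_eq
  have hle : Module.finrank ℝ (vectorSpan ℝ s) ≤ Module.finrank ℝ Pt := Submodule.finrank_le _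
  have h2 : Module.finrank ℝ Pt = 2 := finrank_euclideanSpace_fin
  have hgt : ¬ Module.finrank ℝ (vectorSpan ℝ s) ≤ 1 :=
    fun hh => h (collinear_iff_finrank_le_one.mpr hh)
  omega

lemma max_mem_frontier {S : Finset Pt} {x : Pt} (hx : x ∈ S) (f : Pt →L[ℝ] ℝ) (hf : f ≠ 0)
    (hmax : ∀ y ∈ S, f y ≤ f x) : x ∈ frontier (convexHull ℝ (S : Set Pt)) := by
  have hhull : ∀ y ∈ convexHull ℝ (S : Set Pt), f y ≤ f x := by
    intro y hy
    have hsub : convexHull ℝ (S : Set Pt) ⊆ {z | f z ≤ f x} :=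
      convexHull_min (fun z hz => hmax z hz) (convex_halfSpace_le f.toLinearMap.isLinear _)
    exact hsub hy
  rw [frontier, (hull_closed S).closure_eq]
  refine ⟨subset_convexHull ℝ _ hx, fun hint => ?_⟩
  obtain ⟨v, hv⟩ : ∃ v, f v ≠ 0 := by
    by_contra hc
    push_neg at hc
    exact hf (ContinuousLinearMap.ext fun w => by simp [hc w])
  -- wlog f v > 0
  obtain ⟨w, hw⟩ : ∃ w : Pt, 0 < f w := by
    rcases lt_or_gt_of_ne hv with h | h
    · exact ⟨-v, by simpa using h⟩
    · exact ⟨v, h⟩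
  obtain ⟨ε, hε, hball⟩ := Metric.isOpen_iff.mp isOpen_interior x hint
  have hwne : w ≠ 0 := by rintro rfl; simp at hw
  have hwpos : 0 < ‖w‖ := norm_pos_iff.mpr hwne
  set δ : ℝ := ε / (2 * ‖w‖) with hδ
  have hδpos : 0 < δ := div_pos hε (by positivity)
  have hz : x + δ • w ∈ Metric.ball x ε := by
    rw [Metric.mem_ball, dist_eq_norm]
    have : x + δ • w - x = δ • w := by abel
    rw [this, norm_smul]
    rw [Real.norm_eq_abs, abs_of_pos hδpos, hδ]
    rw [div_mul_eq_mul_div, mul_comm]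
    rw [div_lt_iff₀ (by positivity)]
    nlinarith [norm_pos_iff.mpr hwne]
  have hzh : x + δ • w ∈ convexHull ℝ (S : Set Pt) := interior_subset (hball hz)
  have := hhull _ hzh
  simp only [map_add, map_smul, smul_eq_mul] at this
  nlinarith

lemma exists_support {S : Finset Pt} (hS : ¬Collinear ℝ (S : Set Pt)) {x : Pt}
    (hx : x ∈ frontier (convexHull ℝ (S : Set Pt))) :
    ∃ f : Pt →L[ℝ] ℝ, f ≠ 0 ∧ ∀ y ∈ S, f y ≤ f x := by
  set K := convexHull ℝ (S : Set Pt) with hK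
  have hconv : Convex ℝ K := convex_convexHull ℝ _
  have hne : (interior K).Nonempty :=
    interior_convexHull_nonempty_iff_affineSpan_eq_top.mpr (span_top hS)
  have hxint : x ∉ interior K := fun h => hx.2 h
  obtain ⟨f, hf⟩ := geometric_hahn_banach_open_point hconv.interior isOpen_interior hxint
  obtain ⟨a₀, ha₀⟩ := hne
  have hfne : f ≠ 0 := by
    rintro rfl
    simpa using hf a₀ ha₀
  refine ⟨f, hfne, fun y hy => ?_⟩
  have key : ∀ t : ℝ, 0 < t → t ≤ 1 → f (t • a₀ + (1 - t) • y) < f x := by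
    intro t ht ht1
    exact hf _ (hconv.combo_interior_closure_mem_interior ha₀
      (subset_closure (subset_convexHull ℝ _ hy)) ht (by linarith) (by ring))
  have hcont : Filter.Tendsto (fun t : ℝ => f (t • a₀ + (1 - t) • y)) (nhdsWithin 0 (Set.Ioi 0))
      (nhds (f y)) := by
    have hc : Continuous (fun t : ℝ => f (t • a₀ + (1 - t) • y)) := by
      apply f.continuous.comp
      continuity
    have h0 := (hc.tendsto 0).mono_left (nhdsWithin_le_nhds (s := Set.Ioi (0:ℝ)))
    simpa using h0
  refine le_of_tendsto hcont ?_
  filter_upwards [Ioc_mem_nhdsGT (by norm_num : (0:ℝ) < 1)] with t ht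
  exact (key t ht.1 ht.2).le

lemma noncol_sum (A B : Finset Pt) (hA : ¬Collinear ℝ (A : Set Pt)) (hBne : B.Nonempty) :
    ¬Collinear ℝ ((A + B : Finset Pt) : Set Pt) := by
  intro h
  obtain ⟨b₀, hb₀⟩ := hBne
  apply hA
  rw [collinear_iff_exists_forall_eq_smul_vadd] at h ⊢
  obtain ⟨p₀, v, hv⟩ := h
  refine ⟨p₀ - b₀, v, fun p hp => ?_⟩
  obtain ⟨r, hr⟩ := hv (p + b₀) (by exact_mod_cast Finset.add_mem_add hp hb₀)
  refine ⟨r, ?_⟩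
  rw [vadd_eq_add] at hr ⊢
  have : p = r • v + p₀ - b₀ := by rw [← hr]; abel
  rw [this]; abel

lemma frontier_sub (A B : Finset Pt) (hA : ¬Collinear ℝ (A : Set Pt))
    (hBne : B.Nonempty) :
    ((A + B).filter fun x => x ∈ frontier (convexHull ℝ ((A + B : Finset Pt) : Set Pt)))
      ⊆ (A.filter fun x => x ∈ frontier (convexHull ℝ (A : Set Pt)))
        + (B.filter fun x => x ∈ frontier (convexHull ℝ (B : Set Pt))) := by
  intro c hc
  rw [Finset.mem_filter] at hc
  obtain ⟨hcmem, hcfr⟩ := hc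
  obtain ⟨a, ha, b, hb, rfl⟩ := Finset.mem_add.mp hcmem
  obtain ⟨f, hfne, hmax⟩ := exists_support (noncol_sum A B hA hBne) hcfr
  have hA' : ∀ y ∈ A, f y ≤ f a := by
    intro y hy
    have := hmax (y + b) (Finset.add_mem_add hy hb)
    simp only [map_add] at this
    linarith
  have hB' : ∀ y ∈ B, f y ≤ f b := by
    intro y hy
    have := hmax (a + y) (Finset.add_mem_add ha hy)
    simp only [map_add] at this
    linarith
  exact Finset.add_mem_add
    (Finset.mem_filter.mpr ⟨ha, max_mem_frontier ha f hfne hA'⟩)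
    (Finset.mem_filter.mpr ⟨hb, max_mem_frontier hb f hfne hB'⟩)

theorem tr_unique_representation
    (A B : Finset Pt) (hA : ¬ Collinear ℝ (A : Set Pt)) (hB : ¬ Collinear ℝ (B : Set Pt))
    (huniq : ∀ a₁ ∈ A, ∀ b₁ ∈ B, ∀ a₂ ∈ A, ∀ b₂ ∈ B,
      a₁ + b₁ = a₂ + b₂ → a₁ = a₂ ∧ b₁ = b₂) :
    2 * (intCard (A + B) : ℤ) + (bdryCard (A + B) : ℤ) - 2 ≥
      (B.card : ℤ) * (2 * (intCard A : ℤ) + (bdryCard A : ℤ) - 2) +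
        (2 * (intCard B : ℤ) + (bdryCard B : ℤ) - 2) := by
  have hBne : B.Nonempty := nonempty_of_noncol hB
  have h1 := split_card A
  have h2 := split_card B
  have h3 := split_card (A + B)
  have hcard := card_sum_eq A B huniq
  have hbS : bdryCard (A + B) ≤ bdryCard A * bdryCard B :=
    le_trans (Finset.card_le_card (frontier_sub A B hA hBne)) Finset.card_add_le
  have hbB : bdryCard B ≤ B.card := Finset.card_filter_le _ _
  have h1' : (intCard A : ℤ) + (bdryCard A : ℤ) = (A.card : ℤ) := by exact_mod_cast h1
  have h2' : (intCard B : ℤ) + (bdryCard B : ℤ) = (B.card : ℤ) := by exact_mod_cast h2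
  have h3' : (intCard (A + B) : ℤ) + (bdryCard (A + B) : ℤ) = ((A + B).card : ℤ) := by
    exact_mod_cast h3
  have hcard' : ((A + B).card : ℤ) = (A.card : ℤ) * (B.card : ℤ) := by exact_mod_cast hcard
  have hbS' : (bdryCard (A + B) : ℤ) ≤ (bdryCard A : ℤ) * (bdryCard B : ℤ) := by
    exact_mod_cast hbS
  have hbB' : (bdryCard B : ℤ) ≤ (B.card : ℤ) := by exact_mod_cast hbB
  have hbA0 : (0 : ℤ) ≤ (bdryCard A : ℤ) := Int.ofNat_nonneg _
  have hmul : (bdryCard A : ℤ) * (bdryCard B : ℤ) ≤ (bdryCard A : ℤ) * (B.card : ℤ) :=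
    mul_le_mul_of_nonneg_left hbB' hbA0
  have hiA : (intCard A : ℤ) = (A.card : ℤ) - (bdryCard A : ℤ) := by linarith
  have hiB : (intCard B : ℤ) = (B.card : ℤ) - (bdryCard B : ℤ) := by linarith
  have hiS : (intCard (A + B) : ℤ)
      = (A.card : ℤ) * (B.card : ℤ) - (bdryCard (A + B) : ℤ) := by linarith
  rw [ge_iff_le, hiA, hiB, hiS]
  nlinarith [hmul, hbS']
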